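/- arXiv:2005.03574 — 5 statements merged into one kernel-verified Lean document; each statement's English description precedes it below -/
import Mathlib

section
/- Let V₋₁ := V₁' be the dual of V₁ with Riesz isomorphism R₁ : V₋₁ → V₁, and let Φ_k ∈ V₋₁ be the functional ⟨Φ_k, v⟩ = ⟨φ_k, v⟩₀. Then the V₋₁-orthonormal eigenpairs of the interpolation couple (V₋₁, V₀) are exactly (λ_k Φ_k, λ_k²): that is, (λ_k Φ_k) is a V₋₁-orthonormal basis and ⟨Ψ_k, f⟩ = λ_k² ⟨Ψ_k, F⟩₋₁ for all F ∈ V₀ identified via f, where Ψ_k = λ_k Φ_k. -/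
open scoped RealInnerProductSpace

/-- The `V₋₁`-orthonormal eigenpairs of the dual interpolation couple
`(V₋₁, V₀)` are exactly `(λ_k Φ_k, λ_k²)`: the family `Ψ_k := λ_k Φ_k` is a
`V₋₁`-orthonormal basis (orthonormal and with dense span) and satisfies the eigenvalue
relation `⟨Ψ_k, f⟩ = λ_k² ⟨Ψ_k, F⟩₋₁` for every `F ∈ V₀` identified with `f`. -/
theorem dual_eigenpairs
    {V₀ V₁ : Type*}
    [NormedAddCommGroup V₀] [InnerProductSpace ℝ V₀] [CompleteSpace V₀]
    [NormedAddCommGroup V₁] [InnerProductSpace ℝ V₁] [CompleteSpace V₁]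
    (ι : V₁ →L[ℝ] V₀) (hinj : Function.Injective ι) (hdense : DenseRange ι)
    (φ : ℕ → V₁) (lam : ℕ → ℝ) (hlam : ∀ k, 0 < lam k)
    (hON : Orthonormal ℝ (fun k => ι (φ k)))
    (htot : Dense ((Submodule.span ℝ (Set.range fun k => ι (φ k)) : Submodule ℝ V₀) : Set V₀))
    (heig : ∀ k (v : V₁), ⟪φ k, v⟫ = (lam k) ^ 2 * ⟪ι (φ k), ι v⟫) :
    -- with `R₁` the Riesz map of `V₁`, `Φ_k` the functional `v ↦ ⟨φ_k, v⟩₀`, `Ψ_k = λ_k Φ_k`: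
    (∀ j k : ℕ,
        ((lam j • ((innerSL ℝ (ι (φ j))).comp ι) : StrongDual ℝ V₁))
          ((InnerProductSpace.toDual ℝ V₁).symm
            (lam k • ((innerSL ℝ (ι (φ k))).comp ι)))
          = if j = k then 1 else 0) ∧
    Dense ((Submodule.span ℝ
        (Set.range fun k => (lam k • ((innerSL ℝ (ι (φ k))).comp ι) : StrongDual ℝ V₁))
        : Submodule ℝ (StrongDual ℝ V₁)) : Set (StrongDual ℝ V₁)) ∧
    (∀ (f : V₀) (k : ℕ),
        lam k * ⟪ι (φ k), f⟫
          = (lam k) ^ 2 *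
            ((lam k • ((innerSL ℝ (ι (φ k))).comp ι) : StrongDual ℝ V₁))
              ((InnerProductSpace.toDual ℝ V₁).symm ((innerSL ℝ f).comp ι))) := by
  have hlam0 : ∀ k, lam k ≠ 0 := fun k => (hlam k).ne'
  set Ψ : ℕ → StrongDual ℝ V₁ :=
    fun k => (lam k • ((innerSL ℝ (ι (φ k))).comp ι) : StrongDual ℝ V₁) with hΨ
  set T := InnerProductSpace.toDual ℝ V₁ with hT
  -- Ψ k = T ((lam k)⁻¹ • φ k)
  have key : ∀ k, T ((lam k)⁻¹ • φ k) = Ψ k := by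
    intro k
    ext v
    simp only [hΨ, hT, InnerProductSpace.toDual_apply_apply, inner_smul_left,
      ContinuousLinearMap.smul_apply, ContinuousLinearMap.comp_apply, innerSL_apply_apply,
      RCLike.star_def, starRingEnd_apply, star_trivial]
    rw [heig k v]
    field_simp [hlam0 k]
    ring
  have keysymm : ∀ k, T.symm (Ψ k) = (lam k)⁻¹ • φ k := by
    intro k; rw [← key k, LinearIsometryEquiv.symm_apply_apply]
  have hONite := orthonormal_iff_ite.mp hON
  refine ⟨?_, ?_, ?_⟩
  · intro j k
    rw [keysymm k]
    simp only [hΨ, ContinuousLinearMap.smul_apply, ContinuousLinearMap.comp_apply,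
      innerSL_apply_apply, map_smul, inner_smul_right, smul_eq_mul]
    rw [hONite j k]
    by_cases h : j = k
    · subst h; simp only [if_pos rfl, mul_one]; field_simp [hlam0 j]
    · simp [h]
  · -- density
    -- span of φ is dense in V₁
    have hφdense : Dense ((Submodule.span ℝ (Set.range φ) : Submodule ℝ V₁) : Set V₁) := by
      rw [Submodule.dense_iff_topologicalClosure_eq_top,
        Submodule.topologicalClosure_eq_top_iff, Submodule.eq_bot_iff]
      intro v hv
      have hbot : (Submodule.span ℝ (Set.range fun k => ι (φ k)))ᗮ = ⊥ := by
        rw [← Submodule.topologicalClosure_eq_top_iff,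
          ← Submodule.dense_iff_topologicalClosure_eq_top]
        exact htot
      have hv0 : ι v ∈ (Submodule.span ℝ (Set.range fun k => ι (φ k)))ᗮ := by
        rw [Submodule.mem_orthogonal]
        intro u hu
        induction hu using Submodule.span_induction with
        | mem x hx =>
          obtain ⟨k, rfl⟩ := hx
          have := heig k v
          have hφv : ⟪φ k, v⟫ = 0 := by
            have := (Submodule.mem_orthogonal _ _).mp hv (φ k)
              (Submodule.subset_span ⟨k, rfl⟩)
            simpa [real_inner_comm] using this
          have h2 := heig k v
          rw [hφv] at h2
          have := (mul_eq_zero.mp h2.symm).resolve_left (pow_ne_zero 2 (hlam0 k))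
          simpa using this
        | zero => simp
        | add x y _ _ hx hy => simp [inner_add_left, hx, hy]
        | smul a x _ hx => simp [inner_smul_left, hx]
      have : ι v = 0 := by rw [hbot] at hv0; simpa using hv0
      have : ι v = ι 0 := by simpa using this
      exact hinj this
    -- span of (lam k)⁻¹ • φ k equals span of φ
    have hspan_eq : Submodule.span ℝ (Set.range fun k => (lam k)⁻¹ • φ k)
        = Submodule.span ℝ (Set.range φ) := by
      apply le_antisymm
      · rw [Submodule.span_le]
        rintro _ ⟨k, rfl⟩
        exact Submodule.smul_mem _ _ (Submodule.subset_span ⟨k, rfl⟩)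
      · rw [Submodule.span_le]
        rintro _ ⟨k, rfl⟩
        have : φ k = lam k • ((lam k)⁻¹ • φ k) := by
          rw [smul_smul, mul_inv_cancel₀ (hlam0 k), one_smul]
        rw [this]
        exact Submodule.smul_mem _ _ (Submodule.subset_span ⟨k, rfl⟩)
    -- span of Ψ is the image of span of φ under T
    have himg : (Submodule.span ℝ (Set.range Ψ) : Set (StrongDual ℝ V₁))
        = T '' (Submodule.span ℝ (Set.range φ) : Submodule ℝ V₁) := by
      have h1 : Set.range Ψ = T.toLinearEquiv.toLinearMap ''
          (Set.range fun k => (lam k)⁻¹ • φ k) := by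
        rw [← Set.range_comp]
        exact congrArg Set.range (funext fun k => (key k).symm)
      rw [h1, ← Submodule.map_span, hspan_eq]
      rfl
    rw [himg]
    have hTdr : DenseRange (T : V₁ → StrongDual ℝ V₁) :=
      T.surjective.denseRange
    exact hTdr.dense_image T.continuous hφdense
  · intro f k
    set w := T.symm ((innerSL ℝ f).comp ι) with hw
    have hwv : ∀ v : V₁, ⟪w, v⟫ = ⟪f, ι v⟫ := by
      intro v
      have h0 : T w = (innerSL ℝ f).comp ι := T.apply_symm_apply _
      have h1 := DFunLike.congr_fun h0 v
      rw [hT] at h1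
      rw [InnerProductSpace.toDual_apply_apply] at h1
      simpa using h1
    have h1 : ⟪φ k, w⟫ = ⟪ι (φ k), f⟫ := by
      rw [real_inner_comm, hwv (φ k), real_inner_comm]
    have h2 := heig k w
    rw [h1] at h2
    show lam k * ⟪ι (φ k), f⟫ = (lam k) ^ 2 *
      ((lam k • ((innerSL ℝ (ι (φ k))).comp ι) : StrongDual ℝ V₁)) w
    simp only [ContinuousLinearMap.smul_apply, ContinuousLinearMap.comp_apply,
      innerSL_apply_apply, smul_eq_mul]
    rw [h2]
    ring
end

section
/- For s ∈ (0,1) and F ∈ [V₋₁, V₀]_{1−s}, the Hilbert extrapolation norm equals the dual Hilbert interpolation norm: Σ_k λ_k^{−2s} ⟨F, φ_k⟩² = Σ_k λ_k^{2(1−s)} ⟨F, Ψ_k⟩₋₁², where (Ψ_k, λ_k²) = (λ_k Φ_k, λ_k²) are the eigenpairs of (V₋₁, V₀). -/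
open scoped RealInnerProductSpace

/-- For `s ∈ (0,1)` and `F ∈ [V₋₁,V₀]_{1−s}`, the Hilbert
extrapolation norm equals the dual Hilbert interpolation norm:
`Σ_k λ_k^{−2s} ⟨F,φ_k⟩² = Σ_k λ_k^{2(1−s)} ⟨F,Ψ_k⟩₋₁²` with `Ψ_k = λ_k Φ_k`. -/
theorem extrapolation_norm_eq_dual_interpolation_norm
    {V₀ V₁ : Type*}
    [NormedAddCommGroup V₀] [InnerProductSpace ℝ V₀] [CompleteSpace V₀]
    [NormedAddCommGroup V₁] [InnerProductSpace ℝ V₁] [CompleteSpace V₁]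
    (ι : V₁ →L[ℝ] V₀) (hinj : Function.Injective ι) (hdense : DenseRange ι)
    (φ : ℕ → V₁) (lam : ℕ → ℝ) (hlam : ∀ k, 0 < lam k)
    (hON : Orthonormal ℝ (fun k => ι (φ k)))
    (heig : ∀ k (v : V₁), ⟪φ k, v⟫ = (lam k) ^ 2 * ⟪ι (φ k), ι v⟫)
    (s : ℝ) (hs : s ∈ Set.Ioo (0 : ℝ) 1)
    (F : StrongDual ℝ V₁)
    (hmem : Summable fun k => (lam k) ^ (-(2 : ℝ) * s) * (F (φ k)) ^ 2) :
    (∑' k, (lam k) ^ (-(2 : ℝ) * s) * (F (φ k)) ^ 2)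
      = ∑' k, (lam k) ^ (2 * (1 - s)) *
          (F ((InnerProductSpace.toDual ℝ V₁).symm
            (lam k • ((innerSL ℝ (ι (φ k))).comp ι)))) ^ 2 := by
  refine tsum_congr fun k => ?_
  have hne : lam k ≠ 0 := (hlam k).ne'
  have hdual : (InnerProductSpace.toDual ℝ V₁).symm
      (lam k • ((innerSL ℝ (ι (φ k))).comp ι)) = (lam k)⁻¹ • φ k := by
    have h : (InnerProductSpace.toDual ℝ V₁) ((lam k)⁻¹ • φ k)
        = lam k • ((innerSL ℝ (ι (φ k))).comp ι) := by
      ext v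
      have := heig k v
      simp only [InnerProductSpace.toDual_apply_apply, ContinuousLinearMap.smul_apply,
        ContinuousLinearMap.coe_comp', Function.comp_apply, innerSL_apply_apply,
        real_inner_smul_left, this, smul_eq_mul]
      field_simp
    rw [← h, LinearIsometryEquiv.symm_apply_apply]
  rw [hdual, map_smul, smul_eq_mul, mul_pow]
  have hpow : (lam k) ^ (2 * (1 - s)) * ((lam k)⁻¹) ^ 2
      = (lam k) ^ (-(2 : ℝ) * s) := by
    have h2 : ((lam k) : ℝ) ^ ((2 : ℝ)) = (lam k) ^ (2 : ℕ) := by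
      rw [show ((2:ℝ)) = ((2:ℕ):ℝ) by norm_num, Real.rpow_natCast]
    rw [inv_pow, ← h2, ← Real.rpow_neg (hlam k).le,
      ← Real.rpow_add (hlam k)]
    ring_nf
  rw [← hpow]; ring
end

section
/- Let f ∈ V₀ with associated functional F ∈ V₋₁. For t > 0, the minimizer v*(t) of the dual K-functional K²_{(V₋₁,V₀)}(t;F) coincides with the minimizer v(t) of K²_{(V₀,V₁)}(t;f), in the sense that ⟨v*(t), w⟩ = ⟨v(t), w⟩₀ for all w ∈ V₁. -/
open scoped RealInnerProductSpace

/-- For `f ∈ V₀` with associated functional `F ∈ V₋₁`, the minimizer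
`v*(t)` of the dual K-functional `K²_{(V₋₁,V₀)}(t;F)` coincides with the minimizer `v(t)`
of `K²_{(V₀,V₁)}(t;f)`: `⟨v*(t), w⟩ = ⟨v(t), w⟩₀` for all `w ∈ V₁`. The minimizers are
given by their spectral expansions `v(t) = Σ_k ⟨f,φ_k⟩₀/(1+t²λ_k²) φ_k` and
`v*(t) = Σ_k ⟨F,Ψ_k⟩₋₁/(1+t²λ_k²) Ψ_k` with `Ψ_k = λ_k Φ_k`. -/
theorem dual_minimizer_coincides
    {V₀ V₁ : Type*}
    [NormedAddCommGroup V₀] [InnerProductSpace ℝ V₀] [CompleteSpace V₀]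
    [NormedAddCommGroup V₁] [InnerProductSpace ℝ V₁] [CompleteSpace V₁]
    (ι : V₁ →L[ℝ] V₀) (hinj : Function.Injective ι) (hdense : DenseRange ι)
    (φ : ℕ → V₁) (lam : ℕ → ℝ) (hlam : ∀ k, 0 < lam k)
    (hON : Orthonormal ℝ (fun k => ι (φ k)))
    (htot : Dense ((Submodule.span ℝ (Set.range fun k => ι (φ k)) : Submodule ℝ V₀) : Set V₀))
    (heig : ∀ k (v : V₁), ⟪φ k, v⟫ = (lam k) ^ 2 * ⟪ι (φ k), ι v⟫)
    (f : V₀) (t : ℝ) (ht : 0 < t) :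
    let F : StrongDual ℝ V₁ := (innerSL ℝ f).comp ι
    let Ψ : ℕ → StrongDual ℝ V₁ :=
      fun k => lam k • ((innerSL ℝ (ι (φ k))).comp ι)
    ∀ w : V₁,
      (∑' k, (F ((InnerProductSpace.toDual ℝ V₁).symm (Ψ k))
            / (1 + t ^ 2 * (lam k) ^ 2)) • Ψ k) w
        = ⟪∑' k, (⟪ι (φ k), f⟫ / (1 + t ^ 2 * (lam k) ^ 2)) • ι (φ k), ι w⟫ := by
  intro F Ψ w
  set a : ℕ → ℝ := fun k => ⟪ι (φ k), f⟫ / (1 + t ^ 2 * lam k ^ 2) with ha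
  have hD1 : ∀ k, (1 : ℝ) ≤ 1 + t ^ 2 * lam k ^ 2 := fun k =>
    le_add_of_nonneg_right (by positivity)
  -- the coefficients are square-summable
  have hsq : Summable fun k => ‖a k‖ ^ 2 := by
    refine (hON.inner_products_summable (x := f)).of_nonneg_of_le
      (fun k => by positivity) (fun k => ?_)
    have h1 : ‖a k‖ ≤ ‖⟪ι (φ k), f⟫‖ := by
      rw [ha]
      simp only [norm_div]
      calc ‖⟪ι (φ k), f⟫‖ / ‖1 + t ^ 2 * lam k ^ 2‖
          ≤ ‖⟪ι (φ k), f⟫‖ / 1 := by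
            apply div_le_div_of_nonneg_left (norm_nonneg _) one_pos
            · rw [Real.norm_eq_abs, abs_of_pos (lt_of_lt_of_le one_pos (hD1 k))]
              exact hD1 k
        _ = ‖⟪ι (φ k), f⟫‖ := div_one _
    exact pow_le_pow_left₀ (norm_nonneg _) h1 2
  -- the spectral series converges in V₀
  have hsum : Summable fun k => a k • ι (φ k) := by
    have := (hON.orthogonalFamily.summable_iff_norm_sq_summable a).mpr hsq
    simpa [LinearIsometry.toSpanSingleton_apply] using this
  -- the continuous linear map `g ↦ ⟪g, ι ·⟫` from V₀ to the dual of V₁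
  let T : V₀ →L[ℝ] StrongDual ℝ V₁ :=
    LinearMap.mkContinuous
      { toFun := fun g => (innerSL ℝ g).comp ι
        map_add' := fun g₁ g₂ => by ext v; simp [inner_add_left]
        map_smul' := fun c g => by ext v; simp [inner_smul_left] }
      ‖ι‖ (fun g => by
        refine ContinuousLinearMap.opNorm_le_bound _ (by positivity) (fun v => ?_)
        calc ‖((innerSL ℝ g).comp ι) v‖ = ‖⟪g, ι v⟫‖ := rfl
          _ ≤ ‖g‖ * ‖ι v‖ := norm_inner_le_norm _ _
          _ ≤ ‖g‖ * (‖ι‖ * ‖v‖) := by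
              exact mul_le_mul_of_nonneg_left (ι.le_opNorm v) (norm_nonneg _)
          _ = ‖ι‖ * ‖g‖ * ‖v‖ := by ring)
  have hT : ∀ g v, T g v = ⟪g, ι v⟫ := fun g v => rfl
  -- identify `toDual.symm (Ψ k)` as `(lam k)⁻¹ • φ k`
  have hdual : ∀ k, (InnerProductSpace.toDual ℝ V₁).symm (Ψ k) = (lam k)⁻¹ • φ k := by
    intro k
    have key : InnerProductSpace.toDual ℝ V₁ ((lam k)⁻¹ • φ k) = Ψ k := by
      ext v
      have h2 := heig k v
      have hlk := (hlam k).ne'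
      simp only [InnerProductSpace.toDual_apply_apply, inner_smul_left, RCLike.conj_to_real,
        Ψ, ContinuousLinearMap.smul_apply, ContinuousLinearMap.coe_comp', Function.comp_apply,
        innerSL_apply_apply, smul_eq_mul]
      rw [h2]
      field_simp
    rw [← key, LinearIsometryEquiv.symm_apply_apply]
  -- identify each coefficient
  have hcoef : ∀ k, (F ((InnerProductSpace.toDual ℝ V₁).symm (Ψ k))
      / (1 + t ^ 2 * (lam k) ^ 2)) • Ψ k = T (a k • ι (φ k)) := by
    intro k
    have hlk := (hlam k).ne'
    ext v
    rw [hdual k]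
    have hF : F ((lam k)⁻¹ • φ k) = (lam k)⁻¹ * ⟪f, ι (φ k)⟫ := by
      simp [F, inner_smul_right]
    rw [hF]
    simp only [ContinuousLinearMap.smul_apply, Ψ, hT, inner_smul_left,
      RCLike.conj_to_real, ContinuousLinearMap.coe_comp', Function.comp_apply,
      innerSL_apply_apply, smul_eq_mul, ha]
    rw [real_inner_comm (ι (φ k)) f]
    field_simp
  -- transport the sum through `T`
  have hTsum : HasSum (fun k => T (a k • ι (φ k))) (T (∑' k, a k • ι (φ k))) :=
    T.hasSum hsum.hasSum
  calc (∑' k, (F ((InnerProductSpace.toDual ℝ V₁).symm (Ψ k))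
          / (1 + t ^ 2 * (lam k) ^ 2)) • Ψ k) w
      = (∑' k, T (a k • ι (φ k))) w := by
        congr 1
        exact tsum_congr hcoef
    _ = T (∑' k, a k • ι (φ k)) w := by rw [hTsum.tsum_eq]
    _ = ⟪∑' k, (⟪ι (φ k), f⟫ / (1 + t ^ 2 * (lam k) ^ 2)) • ι (φ k), ι w⟫ := rfl
end

section
/- Suppose f ∈ V_h excites only m distinct eigenvalues, i.e. |{λ_k² : ⟨f,φ_k⟩₀ ≠ 0}| = m. If r+1 ≥ m, then the reduced space V_r = span{v(t₀),…,v(t_r)} (snapshots at distinct t₀ = 0 < t₁ < ⋯ < t_r) contains the spectral projections f^{i_j} of f onto each excited eigenspace, and the eigenpairs of the reduced couple ((V_r,‖·‖₀),(V_r,‖·‖₁)) are exactly (f^{i_j}/‖f^{i_j}‖₀, λ_{i_j}²); consequently the reduced basis extrapolation norm is exact: ‖f‖²_{H_r^{−s}} = Σ_j λ_{i_j}^{−2s} ‖f^{i_j}‖₀² = ‖f‖²_{H^{−s}}. -/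
open scoped RealInnerProductSpace
open Polynomial Finset

lemma cauchy_det_ne_zero' {m : ℕ} (x μ : Fin m → ℝ) (hx : Function.Injective x)
    (hμ : Function.Injective μ) (hμ0 : ∀ j, μ j ≠ 0)
    (hpos : ∀ i j, 1 + x i * μ j ≠ 0) :
    (Matrix.of fun i j : Fin m => (1 + x i * μ j)⁻¹).det ≠ 0 := by
  intro hdet
  obtain ⟨u, hu, huv⟩ := Matrix.exists_mulVec_eq_zero_iff.mpr hdet
  -- huv : ∀ i, ∑ j, (1 + x i * μ j)⁻¹ * u j = 0
  set Q : ℝ[X] := ∑ j, C (u j) * ∏ l ∈ univ.erase j, (C 1 + C (μ l) * X) with hQ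
  have hm : 0 < m := by
    rcases Nat.eq_zero_or_pos m with h | h
    · exfalso; apply hu; funext i; exact absurd i.2 (by omega)
    · exact h
  have hdeg : Q.natDegree < m := by
    have : Q.natDegree ≤ m - 1 := by
      refine (Polynomial.natDegree_sum_le _ _).trans ?_
      rw [Finset.fold_max_le]
      constructor
      · omega
      intro j _
      refine (Polynomial.natDegree_mul_le).trans ?_
      simp only [Polynomial.natDegree_C, zero_add]
      refine (Polynomial.natDegree_prod_le _ _).trans ?_
      calc ∑ l ∈ univ.erase j, (C 1 + C (μ l) * X).natDegree
          ≤ ∑ l ∈ univ.erase j, 1 := by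
            refine Finset.sum_le_sum fun l _ => ?_
            refine (Polynomial.natDegree_add_le _ _).trans ?_
            exact max_le (by simp) ((Polynomial.natDegree_mul_le).trans (by simp))
        _ = m - 1 := by simp [Finset.card_erase_of_mem]
    omega
  have hroots : ∀ i, Q.eval (x i) = 0 := by
    intro i
    have h0 : ∑ j, (1 + x i * μ j)⁻¹ * u j = 0 := by
      have := congrFun huv i
      simpa [Matrix.mulVec, dotProduct] using this
    have : Q.eval (x i) = (∏ l, (1 + x i * μ l)) * ∑ j, (1 + x i * μ j)⁻¹ * u j := by
      rw [Finset.mul_sum, hQ]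
      simp only [Polynomial.eval_finset_sum, Polynomial.eval_mul, Polynomial.eval_C,
        Polynomial.eval_prod, Polynomial.eval_add, Polynomial.eval_one, Polynomial.eval_X]
      refine Finset.sum_congr rfl fun j _ => ?_
      have hprod : ∀ S : Finset (Fin m), ∏ l ∈ S, (1 + μ l * x i) = ∏ l ∈ S, (1 + x i * μ l) :=
        fun S => Finset.prod_congr rfl fun l _ => by ring
      rw [hprod, ← Finset.mul_prod_erase (univ) (fun l => 1 + x i * μ l) (Finset.mem_univ j)]
      have hne := hpos i j
      field_simp
    rw [this, h0, mul_zero]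
  have hQ0 : Q = 0 :=
    Polynomial.eq_zero_of_natDegree_lt_card_of_eval_eq_zero Q hx hroots
      (by simpa using hdeg)
  obtain ⟨j, hj⟩ := Function.ne_iff.mp hu
  have heval : Q.eval (-(μ j)⁻¹) = 0 := by rw [hQ0]; simp
  rw [hQ] at heval
  simp only [Polynomial.eval_finset_sum, Polynomial.eval_mul, Polynomial.eval_C,
    Polynomial.eval_prod, Polynomial.eval_add, Polynomial.eval_one, Polynomial.eval_X] at heval
  rw [Finset.sum_eq_single j] at heval
  · -- u j * ∏_{l ≠ j} (1 - μ l / μ j) = 0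
    rcases mul_eq_zero.mp heval with h | h
    · exact hj (by simp [h])
    · obtain ⟨l, hl, hl0⟩ := Finset.prod_eq_zero_iff.mp h
      apply (Finset.mem_erase.mp hl).1
      apply hμ
      have := hμ0 j
      field_simp at hl0
      linarith
  · intro b _ hb
    rw [Finset.prod_eq_zero (Finset.mem_erase.mpr ⟨hb.symm, Finset.mem_univ j⟩)]
    · ring
    · rw [mul_neg, mul_inv_cancel₀ (hμ0 j)]; ring
  · intro h; exact absurd (Finset.mem_univ j) h

/-- If `f` excites only `m` distinct eigenvalues and `r+1 ≥ m`, then the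
reduced space `V_r = span{v(t₀),…,v(t_r)}` contains the spectral projections `f^{i_j}` of
`f` onto the excited eigenspaces, `V_r` is spanned by them, the eigenpairs of the reduced
couple `((V_r,‖·‖₀),(V_r,‖·‖₁))` are exactly `(f^{i_j}/‖f^{i_j}‖₀, λ_{i_j}²)`, and the
reduced basis extrapolation norm is exact:
`‖f‖²_{H_r^{−s}} = Σ_j λ_{i_j}^{−2s}‖f^{i_j}‖₀² = ‖f‖²_{H^{−s}}`. -/
theorem reduced_space_exactness
    {V : Type*} [NormedAddCommGroup V] [InnerProductSpace ℝ V] {N : ℕ}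
    (φ : OrthonormalBasis (Fin N) ℝ V) (lam : Fin N → ℝ) (hlam : ∀ k, 0 < lam k)
    (ip1 : V → V → ℝ)
    (hsymm : ∀ v w, ip1 v w = ip1 w v)
    (hadd : ∀ u v w, ip1 (u + v) w = ip1 u w + ip1 v w)
    (hsmul : ∀ (c : ℝ) (v w : V), ip1 (c • v) w = c * ip1 v w)
    (heig : ∀ k (v : V), ip1 (φ k) v = (lam k) ^ 2 * ⟪φ k, v⟫)
    (f : V) (m : ℕ) (idx : Fin m → Fin N)
    (hdist : StrictMono fun j => (lam (idx j)) ^ 2)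
    (hexc₁ : ∀ k, ⟪f, φ k⟫ ≠ 0 → ∃ j, (lam k) ^ 2 = (lam (idx j)) ^ 2)
    (hexc₂ : ∀ j, ∃ k, (lam k) ^ 2 = (lam (idx j)) ^ 2 ∧ ⟪f, φ k⟫ ≠ 0)
    (r : ℕ) (t : Fin (r + 1) → ℝ) (ht0 : t 0 = 0) (hmono : StrictMono t)
    (hmr : m ≤ r + 1)
    (vs : Fin (r + 1) → V)
    (hvs : ∀ i, ∀ w : V, ⟪vs i, w⟫ + (t i) ^ 2 * ip1 (vs i) w = ⟪f, w⟫)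
    (s : ℝ) (hs : s ∈ Set.Ioo (0 : ℝ) 1) :
    let P : Fin m → V := fun j =>
      ∑ k ∈ Finset.univ.filter (fun k => (lam k) ^ 2 = (lam (idx j)) ^ 2),
        ⟪f, φ k⟫ • φ k
    let Vr : Submodule ℝ V := Submodule.span ℝ (Set.range vs)
    (∀ j, P j ∈ Vr) ∧
    Vr = Submodule.span ℝ (Set.range P) ∧
    (∀ j, ∀ w ∈ Vr, ip1 (P j) w = (lam (idx j)) ^ 2 * ⟪P j, w⟫) ∧
    Orthonormal ℝ (fun j => ‖P j‖⁻¹ • P j) ∧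
    (∑ j, ((lam (idx j)) ^ 2) ^ (-s) * ‖P j‖ ^ 2
        = ∑ k, ((lam k) ^ 2) ^ (-s) * ⟪f, φ k⟫ ^ 2) := by
  intro P Vr
  set S : Fin m → Finset (Fin N) :=
    fun j => Finset.univ.filter (fun k => (lam k) ^ 2 = (lam (idx j)) ^ 2) with hSdef
  set μ : Fin m → ℝ := fun j => (lam (idx j)) ^ 2 with hμdef
  have hPdef : ∀ j, P j = ∑ k ∈ S j, ⟪f, φ k⟫ • φ k := fun j => rfl
  have hμpos : ∀ j, 0 < μ j := fun j => pow_pos (hlam _) 2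
  have hμinj : Function.Injective μ := hdist.injective
  have hmemS : ∀ j k, k ∈ S j ↔ (lam k) ^ 2 = μ j := by
    intro j k
    simp [hSdef, hμdef]
  -- ip1 of zero and of sums
  have hz : ∀ w, ip1 0 w = 0 := by
    intro w
    have := hsmul 0 0 w
    simpa using this
  have hsum : ∀ {ι : Type} (T : Finset ι) (g : ι → V) (w : V),
      ip1 (∑ k ∈ T, g k) w = ∑ k ∈ T, ip1 (g k) w := by
    intro ι T g w
    induction T using Finset.cons_induction with
    | empty => simpa using hz w
    | cons a T ha ih => rw [Finset.sum_cons, Finset.sum_cons, hadd, ih]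
  -- coefficients of snapshots
  have hcoef : ∀ i k, (1 + (t i) ^ 2 * (lam k) ^ 2) * ⟪φ k, vs i⟫ = ⟪f, φ k⟫ := by
    intro i k
    have h := hvs i (φ k)
    have h2 : ip1 (vs i) (φ k) = (lam k) ^ 2 * ⟪φ k, vs i⟫ := by
      rw [hsymm, heig]
    rw [h2] at h
    have hcm : ⟪φ k, vs i⟫ = ⟪vs i, φ k⟫ := real_inner_comm _ _
    linear_combination h + hcm
  have hdenpos : ∀ (i : Fin (r+1)) (y : ℝ), 0 < y → (0:ℝ) < 1 + (t i) ^ 2 * y := by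
    intro i y hy
    have h1 : (0:ℝ) ≤ (t i) ^ 2 * y := mul_nonneg (sq_nonneg _) hy.le
    linarith
  -- inner products with P
  have hPinner : ∀ j k, ⟪φ k, P j⟫ = if k ∈ S j then ⟪f, φ k⟫ else 0 := by
    intro j k
    rw [hPdef, inner_sum]
    simp_rw [real_inner_smul_right, orthonormal_iff_ite.mp φ.orthonormal]
    simp [mul_ite, Finset.sum_ite_eq]
  have hPw : ∀ j (w : V), ⟪P j, w⟫ = ∑ k ∈ S j, ⟪f, φ k⟫ * ⟪φ k, w⟫ := by
    intro j w
    rw [hPdef, sum_inner]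
    exact Finset.sum_congr rfl fun k _ => real_inner_smul_left _ _ _
  -- expansion of snapshots in terms of P
  have hvsP : ∀ i, vs i = ∑ j, (1 + (t i) ^ 2 * μ j)⁻¹ • P j := by
    intro i
    refine φ.repr.injective (PiLp.ext fun k => ?_)
    rw [φ.repr_apply_apply, φ.repr_apply_apply, inner_sum]
    simp only [real_inner_smul_right]
    have hLHS : ⟪φ k, vs i⟫ = (1 + (t i) ^ 2 * (lam k) ^ 2)⁻¹ * ⟪f, φ k⟫ := by
      have hne : (1 + (t i) ^ 2 * (lam k) ^ 2) ≠ 0 :=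
        (hdenpos i _ (pow_pos (hlam k) 2)).ne'
      field_simp
      linear_combination hcoef i k
    rw [hLHS]
    by_cases hk : ∃ j, (lam k) ^ 2 = μ j
    · obtain ⟨j0, hj0⟩ := hk
      rw [Finset.sum_eq_single j0]
      · rw [hPinner, if_pos ((hmemS j0 k).mpr hj0), hj0]
      · intro j _ hj
        rw [hPinner, if_neg, mul_zero]
        rw [hmemS]
        intro h
        exact hj (hμinj (h ▸ hj0))
      · intro h; exact absurd (Finset.mem_univ j0) h
    · have hf0 : ⟪f, φ k⟫ = 0 := by
        by_contra h
        exact hk (hexc₁ k h)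
      rw [hf0, mul_zero]
      refine (Finset.sum_eq_zero fun j _ => ?_).symm
      rw [hPinner]
      by_cases hkj : k ∈ S j
      · rw [if_pos hkj, hf0, mul_zero]
      · rw [if_neg hkj, mul_zero]
  -- the Cauchy matrix
  have htnonneg : ∀ i, 0 ≤ t i := by
    intro i
    rw [← ht0]
    exact hmono.monotone (Fin.zero_le i)
  set x : Fin m → ℝ := fun i => (t (Fin.castLE hmr i)) ^ 2 with hxdef
  have hxmono : StrictMono x := by
    intro a b hab
    have h1 : t (Fin.castLE hmr a) < t (Fin.castLE hmr b) := hmono (by simpa using hab)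
    exact pow_lt_pow_left₀ h1 (htnonneg _) (by norm_num)
  set A : Matrix (Fin m) (Fin m) ℝ := Matrix.of (fun i j => (1 + x i * μ j)⁻¹) with hAdef
  have hdet : A.det ≠ 0 :=
    cauchy_det_ne_zero' x μ hxmono.injective hμinj (fun j => (hμpos j).ne')
      (fun i j => (hdenpos (Fin.castLE hmr i) _ (hμpos j)).ne')
  have hBA : A⁻¹ * A = 1 := Matrix.nonsing_inv_mul A (isUnit_iff_ne_zero.mpr hdet)
  have hPvs : ∀ j, P j = ∑ i, (A⁻¹ j i) • vs (Fin.castLE hmr i) := by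
    intro j
    have step : ∀ i : Fin m, (A⁻¹ j i) • vs (Fin.castLE hmr i)
        = ∑ j', (A⁻¹ j i * A i j') • P j' := by
      intro i
      rw [hvsP, Finset.smul_sum]
      exact Finset.sum_congr rfl fun j' _ => by rw [smul_smul]; rfl
    rw [Finset.sum_congr rfl fun i _ => step i, Finset.sum_comm]
    have step2 : ∀ j', (∑ i, (A⁻¹ j i * A i j') • P j') = ((A⁻¹ * A) j j') • P j' := by
      intro j'
      rw [Matrix.mul_apply, Finset.sum_smul]
    rw [Finset.sum_congr rfl fun j' _ => step2 j', hBA]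
    simp [Matrix.one_apply, ite_smul]
  have hmem : ∀ j, P j ∈ Vr := by
    intro j
    rw [hPvs]
    exact Submodule.sum_mem _ fun i _ =>
      Submodule.smul_mem _ _ (Submodule.subset_span ⟨_, rfl⟩)
  -- P j nonzero
  have hPne : ∀ j, P j ≠ 0 := by
    intro j hj
    obtain ⟨k, hk1, hk2⟩ := hexc₂ j
    have := hPinner j k
    rw [hj, inner_zero_right, if_pos ((hmemS j k).mpr hk1)] at this
    exact hk2 this.symm
  -- orthogonality
  have hPP : ∀ j j', j ≠ j' → ⟪P j, P j'⟫ = 0 := by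
    intro j j' hne
    rw [hPw]
    refine Finset.sum_eq_zero fun k hk => ?_
    rw [hPinner, if_neg, mul_zero]
    rw [hmemS]
    intro h
    exact hne (hμinj (((hmemS j k).mp hk).symm ▸ h))
  refine ⟨hmem, ?_, ?_, ?_, ?_⟩
  · -- span equality
    refine le_antisymm ?_ ?_
    · rw [Submodule.span_le]
      rintro _ ⟨i, rfl⟩
      rw [hvsP]
      exact Submodule.sum_mem _ fun j _ =>
        Submodule.smul_mem _ _ (Submodule.subset_span ⟨j, rfl⟩)
    · rw [Submodule.span_le]
      rintro _ ⟨j, rfl⟩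
      exact hmem j
  · -- eigenvalue equation
    intro j w _
    rw [hPdef, hsum, hPw, Finset.mul_sum]
    refine Finset.sum_congr rfl fun k hk => ?_
    rw [hsmul, heig, ((hmemS j k).mp hk)]
    ring
  · -- orthonormality
    constructor
    · intro j
      exact norm_smul_inv_norm (hPne j)
    · intro j j' hne
      rw [real_inner_smul_left, real_inner_smul_right, hPP j j' hne]
      ring
  · -- exactness of the norm
    have hnorm : ∀ j, ‖P j‖ ^ 2 = ∑ k ∈ S j, ⟪f, φ k⟫ ^ 2 := by
      intro j
      rw [← real_inner_self_eq_norm_sq, hPw]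
      refine Finset.sum_congr rfl fun k hk => ?_
      rw [hPinner, if_pos hk]
      ring
    have h1 : ∀ j, (μ j) ^ (-s) * ‖P j‖ ^ 2
        = ∑ k ∈ S j, ((lam k) ^ 2) ^ (-s) * ⟪f, φ k⟫ ^ 2 := by
      intro j
      rw [hnorm, Finset.mul_sum]
      exact Finset.sum_congr rfl fun k hk => by rw [((hmemS j k).mp hk)]
    have hdisj : ((Finset.univ : Finset (Fin m)) : Set (Fin m)).PairwiseDisjoint S := by
      intro j _ j' _ hne
      refine Finset.disjoint_left.mpr fun k hk hk' => ?_
      exact hne (hμinj (((hmemS j k).mp hk).symm ▸ (hmemS j' k).mp hk'))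
    calc ∑ j, (μ j) ^ (-s) * ‖P j‖ ^ 2
        = ∑ j, ∑ k ∈ S j, ((lam k) ^ 2) ^ (-s) * ⟪f, φ k⟫ ^ 2 :=
          Finset.sum_congr rfl fun j _ => h1 j
      _ = ∑ k ∈ Finset.univ.biUnion S, ((lam k) ^ 2) ^ (-s) * ⟪f, φ k⟫ ^ 2 :=
          (Finset.sum_biUnion hdisj).symm
      _ = ∑ k, ((lam k) ^ 2) ^ (-s) * ⟪f, φ k⟫ ^ 2 := by
          refine Finset.sum_subset (Finset.subset_univ _) fun k _ hk => ?_
          have hf0 : ⟪f, φ k⟫ = 0 := by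
            by_contra h
            obtain ⟨j, hj⟩ := hexc₁ k h
            exact hk (Finset.mem_biUnion.mpr
              ⟨j, Finset.mem_univ j, (hmemS j k).mpr hj⟩)
          rw [hf0]
          ring
end

section
/- For distinct snapshots 0 = t₀ < t₁ < ⋯ < t_r, if the number m of distinct eigenvalues excited by f satisfies m ≥ r+1, then the snapshot set {v(t₀), …, v(t_r)} is linearly independent, where v(t) = Σ_k ⟨f,φ_k⟩₀/(1+t²λ_k²) φ_k. -/
open scoped RealInnerProductSpace

open Polynomial in
/-- If the number `m` of distinct eigenvalues excited by `f`
satisfies `m ≥ r+1`, then the snapshots `v(t₀),…,v(t_r)` at distinct points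
`0 = t₀ < t₁ < ⋯ < t_r` are linearly independent, where
`v(t) = Σ_k ⟨f,φ_k⟩₀/(1+t²λ_k²) φ_k`. -/
theorem snapshots_linearly_independent
    {V : Type*} [NormedAddCommGroup V] [InnerProductSpace ℝ V] {N : ℕ}
    (φ : OrthonormalBasis (Fin N) ℝ V) (lam : Fin N → ℝ) (hlam : ∀ k, 0 < lam k)
    (f : V) (m : ℕ)
    (hm : ({x : ℝ | ∃ k, x = (lam k) ^ 2 ∧ ⟪f, φ k⟫ ≠ 0}).ncard = m)
    (r : ℕ) (t : Fin (r + 1) → ℝ) (ht0 : t 0 = 0) (hmono : StrictMono t)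
    (hmr : r + 1 ≤ m) :
    LinearIndependent ℝ
      (fun i : Fin (r + 1) =>
        ∑ k, (⟪f, φ k⟫ / (1 + (t i) ^ 2 * (lam k) ^ 2)) • φ k) := by
  classical
  -- basic facts about t
  have htnn : ∀ i, 0 ≤ t i := fun i => ht0 ▸ hmono.monotone (Fin.zero_le i)
  have htsq : ∀ i j : Fin (r+1), t i ^ 2 = t j ^ 2 → i = j := by
    intro i j h
    exact hmono.injective ((sq_eq_sq₀ (htnn i) (htnn j)).mp h)
  have hden : ∀ (i : Fin (r+1)) (x : ℝ), 0 < x → 1 + t i ^ 2 * x ≠ 0 := by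
    intro i x hx
    have : 0 ≤ t i ^ 2 * x := mul_nonneg (sq_nonneg _) hx.le
    positivity
  rw [Fintype.linearIndependent_iff]
  intro c hc
  -- coordinate equations
  have hcoord : ∀ k : Fin N,
      (∑ i, c i * (⟪f, φ k⟫ / (1 + (t i) ^ 2 * (lam k) ^ 2))) = 0 := by
    intro k
    have h2 : ∑ k', (∑ i, c i * (⟪f, φ k'⟫ / (1 + (t i) ^ 2 * (lam k') ^ 2))) • φ k'
        = (0 : V) := by
      rw [← hc]
      simp only [Finset.smul_sum, smul_smul, Finset.sum_smul]
      rw [Finset.sum_comm]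
    exact Fintype.linearIndependent_iff.mp φ.orthonormal.linearIndependent _ h2 k
  -- the set of excited eigenvalues
  set S : Set ℝ := {x : ℝ | ∃ k, x = (lam k) ^ 2 ∧ ⟪f, φ k⟫ ≠ 0} with hS
  have hSfin : S.Finite := by
    apply (Set.finite_range fun k => lam k ^ 2).subset
    rintro x ⟨k, rfl, -⟩
    exact ⟨k, rfl⟩
  have hScard : r + 1 ≤ hSfin.toFinset.card := by
    rwa [← Set.ncard_eq_toFinset_card S hSfin, hm]
  obtain ⟨s, hsub, hscard⟩ := Finset.exists_subset_card_eq hScard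
  have hsS : ∀ x ∈ s, x ∈ S := fun x hx => hSfin.mem_toFinset.mp (hsub hx)
  have hspos : ∀ x ∈ s, 0 < x := by
    rintro x hx
    obtain ⟨k, rfl, -⟩ := hsS x hx
    exact pow_pos (hlam k) 2
  -- root equations
  have hroot : ∀ x ∈ s, (∑ i, c i / (1 + t i ^ 2 * x)) = 0 := by
    intro x hx
    obtain ⟨k, rfl, hk⟩ := hsS x hx
    have h := hcoord k
    have h' : ⟪f, φ k⟫ * (∑ i, c i / (1 + t i ^ 2 * lam k ^ 2)) = 0 := by
      rw [Finset.mul_sum, ← h]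
      apply Finset.sum_congr rfl
      intro i _
      ring
    exact (mul_eq_zero.mp h').resolve_left hk
  -- the polynomial
  set P : ℝ[X] := ∑ i, C (c i) * ∏ j ∈ Finset.univ.erase i, (C (t j ^ 2) * X + 1)
    with hP
  have hPeval : ∀ x : ℝ, P.eval x = ∑ i, c i * ∏ j ∈ Finset.univ.erase i,
      (t j ^ 2 * x + 1) := by
    intro x
    simp [hP, Polynomial.eval_finset_sum, Polynomial.eval_prod]
  have heval : ∀ x ∈ s, P.eval x = 0 := by
    intro x hx
    have hxpos := hspos x hx
    have key : ∀ i : Fin (r+1), c i * ∏ j ∈ Finset.univ.erase i, (t j ^ 2 * x + 1)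
        = (c i / (1 + t i ^ 2 * x)) * ∏ j, (t j ^ 2 * x + 1) := by
      intro i
      rw [← Finset.mul_prod_erase Finset.univ _ (Finset.mem_univ i)]
      have hne : t i ^ 2 * x + 1 ≠ 0 := by
        rw [add_comm]; exact hden i x hxpos
      rw [add_comm (t i ^ 2 * x) 1, ← mul_assoc, div_mul_cancel₀ _ (hden i x hxpos)]
    rw [hPeval]
    calc ∑ i, c i * ∏ j ∈ Finset.univ.erase i, (t j ^ 2 * x + 1)
        = (∑ i, c i / (1 + t i ^ 2 * x)) * ∏ j, (t j ^ 2 * x + 1) := by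
          rw [Finset.sum_mul]; exact Finset.sum_congr rfl fun i _ => key i
      _ = 0 := by rw [hroot x hx, zero_mul]
  have hdeg : P.natDegree ≤ r := by
    apply Polynomial.natDegree_sum_le_of_forall_le
    intro i _
    calc (C (c i) * ∏ j ∈ Finset.univ.erase i, (C (t j ^ 2) * X + 1)).natDegree
        ≤ (C (c i)).natDegree
          + (∏ j ∈ Finset.univ.erase i, (C (t j ^ 2) * X + 1)).natDegree :=
          Polynomial.natDegree_mul_le
      _ ≤ 0 + ∑ j ∈ Finset.univ.erase i, 1 := by
          apply add_le_add
          · simp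
          · refine (Polynomial.natDegree_prod_le _ _).trans (Finset.sum_le_sum ?_)
            intro j _
            rw [show (1:Polynomial ℝ) = C 1 from (map_one C).symm]
            exact Polynomial.natDegree_linear_le
      _ ≤ r := by
          simp [Finset.card_erase_of_mem]
  have hP0 : P = 0 := by
    apply Polynomial.eq_zero_of_natDegree_lt_card_of_eval_eq_zero' P s heval
    rw [hscard]
    exact Nat.lt_succ_of_le hdeg
  -- c i = 0 for i ≠ 0
  have hczero : ∀ i : Fin (r+1), i ≠ 0 → c i = 0 := by
    intro i hi
    have hti : 0 < t i := by
      have := hmono (Fin.pos_of_ne_zero hi)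
      rwa [ht0] at this
    have hti2 : (t i ^ 2) ≠ 0 := by positivity
    set y : ℝ := -(t i ^ 2)⁻¹ with hy
    have h0 : P.eval y = 0 := by rw [hP0]; simp
    rw [hPeval] at h0
    rw [Finset.sum_eq_single i] at h0
    · -- h0 : c i * ∏ = 0, show product nonzero
      have hprod : ∏ j ∈ Finset.univ.erase i, (t j ^ 2 * y + 1) ≠ 0 := by
        apply Finset.prod_ne_zero_iff.mpr
        intro j hj hzero
        apply Finset.ne_of_mem_erase hj
        apply htsq
        have : t j ^ 2 * (t i ^ 2)⁻¹ = 1 := by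
          rw [hy] at hzero; linarith
        field_simp at this
        exact this
      have := (mul_eq_zero.mp h0).resolve_right hprod
      exact this
    · intro i' _ hi'
      apply mul_eq_zero_of_right
      apply Finset.prod_eq_zero (Finset.mem_erase.mpr ⟨Ne.symm hi', Finset.mem_univ i⟩)
      rw [hy]
      field_simp
      norm_num
    · intro h; exact absurd (Finset.mem_univ i) h
  -- c 0 = 0
  have hc0 : c 0 = 0 := by
    have hs_ne : s.Nonempty := by
      rw [← Finset.card_pos, hscard]; omega
    obtain ⟨x, hx⟩ := hs_ne
    have h := hroot x hx
    rw [Finset.sum_eq_single (0 : Fin (r+1))] at h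
    · rw [ht0] at h; simpa using h
    · intro i _ hi; rw [hczero i hi, zero_div]
    · intro h'; exact absurd (Finset.mem_univ _) h'
  intro i
  by_cases hi : i = 0
  · rw [hi]; exact hc0
  · exact hczero i hi
end
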